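/- Let d, d' be positive integers and let the hypothesis h = g ∘ f with f : ℝ^d → ℝ^{d'} an invertible representation function and g : ℝ^{d'} → 𝒴 a labeling function. Let the unseen domain be (μ^{(u)}, f^{(u)}, g^{(u)}) and let there be S seen domains (μ^{(s)}, f^{(s)}, g^{(s)}) for s = 1, …, S, with true hypotheses h^{(v)} = g^{(v)} ∘ f^{(v)}. Assume the loss function ℓ is nonnegative, symmetric, bounded by a finite positive number L, and satisfies the triangle inequality. Then for all convex weights λ^{(1)}, …, λ^{(S)} (nonnegative and summing to one): R^{(u)}(h) ≤ Σ_{s=1}^{S} λ^{(s)} R^{(s)}(h) + L Σ_{s=1}^{S} λ^{(s)} ‖f_# μ^{(u)} − f_# μ^{(s)}‖₁ + Σ_{s=1}^{S} λ^{(s)} σ^{(u,s)}, where σ^{(u,s)} := min{ E_{x∼μ^{(u)}}[ℓ(h^{(u)}(x), h^{(s)}(x))], E_{x∼μ^{(s)}}[ℓ(h^{(u)}(x), h^{(s)}(x))] }. -/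

import Mathlib

open MeasureTheory

/-- The L¹ (total variation) distance between two measures:
`‖μ − ν‖₁ = ∫ |dμ/dλ − dν/dλ| dλ` where `λ = μ + ν` is a common dominating measure. -/
noncomputable def l1Dist {α : Type*} [MeasurableSpace α] (μ ν : Measure α) : ℝ :=
  ∫ x, |(μ.rnDeriv (μ + ν) x).toReal - (ν.rnDeriv (μ + ν) x).toReal| ∂(μ + ν)

/-- Change of measure costs at most `L * l1Dist` for a `[0, L]`-valued measurable function. -/
lemma integral_le_integral_add_l1Dist {α : Type*} [MeasurableSpace α]
    (ν₁ ν₂ : Measure α) [IsFiniteMeasure ν₁] [IsFiniteMeasure ν₂]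
    {ψ : α → ℝ} (hψ : Measurable ψ) {L : ℝ}
    (h0 : ∀ x, 0 ≤ ψ x) (hLb : ∀ x, ψ x ≤ L) :
    ∫ x, ψ x ∂ν₁ ≤ (∫ x, ψ x ∂ν₂) + L * l1Dist ν₁ ν₂ := by
  set π := ν₁ + ν₂ with hπ
  have hac₁ : ν₁ ≪ π := Measure.absolutelyContinuous_of_le (Measure.le_add_right le_rfl)
  have hac₂ : ν₂ ≪ π := Measure.absolutelyContinuous_of_le (Measure.le_add_left le_rfl)
  have hr₁ : Integrable (fun x => (ν₁.rnDeriv π x).toReal) π :=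
    Measure.integrable_toReal_rnDeriv
  have hr₂ : Integrable (fun x => (ν₂.rnDeriv π x).toReal) π :=
    Measure.integrable_toReal_rnDeriv
  have hψsm : AEStronglyMeasurable ψ π := hψ.aestronglyMeasurable
  have hψb : ∀ x, ‖ψ x‖ ≤ L := fun x => by
    rw [Real.norm_eq_abs, abs_of_nonneg (h0 x)]; exact hLb x
  have hint₁ : Integrable (fun x => (ν₁.rnDeriv π x).toReal • ψ x) π := by
    simpa [smul_eq_mul, mul_comm] using hr₁.bdd_mul (c := L) hψsm (Filter.Eventually.of_forall hψb)
  have hint₂ : Integrable (fun x => (ν₂.rnDeriv π x).toReal • ψ x) π := by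
    simpa [smul_eq_mul, mul_comm] using hr₂.bdd_mul (c := L) hψsm (Filter.Eventually.of_forall hψb)
  have e₁ : ∫ x, (ν₁.rnDeriv π x).toReal • ψ x ∂π = ∫ x, ψ x ∂ν₁ :=
    integral_rnDeriv_smul hac₁
  have e₂ : ∫ x, (ν₂.rnDeriv π x).toReal • ψ x ∂π = ∫ x, ψ x ∂ν₂ :=
    integral_rnDeriv_smul hac₂
  have habs : Integrable
      (fun x => |(ν₁.rnDeriv π x).toReal - (ν₂.rnDeriv π x).toReal| * L) π :=
    (hr₁.sub hr₂).abs.mul_const L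
  have hsub : ∫ x, ψ x ∂ν₁ - ∫ x, ψ x ∂ν₂
      = ∫ x, ((ν₁.rnDeriv π x).toReal - (ν₂.rnDeriv π x).toReal) * ψ x ∂π := by
    rw [← e₁, ← e₂, ← integral_sub hint₁ hint₂]
    simp [smul_eq_mul, sub_mul]
  have hmono : ∫ x, ((ν₁.rnDeriv π x).toReal - (ν₂.rnDeriv π x).toReal) * ψ x ∂π
      ≤ ∫ x, |(ν₁.rnDeriv π x).toReal - (ν₂.rnDeriv π x).toReal| * L ∂π := by
    refine integral_mono (by simpa [smul_eq_mul, sub_mul, Pi.sub_def] using hint₁.sub hint₂) habs ?_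
    intro x
    calc ((ν₁.rnDeriv π x).toReal - (ν₂.rnDeriv π x).toReal) * ψ x
        ≤ |((ν₁.rnDeriv π x).toReal - (ν₂.rnDeriv π x).toReal) * ψ x| := le_abs_self _
      _ = |(ν₁.rnDeriv π x).toReal - (ν₂.rnDeriv π x).toReal| * |ψ x| := abs_mul _ _
      _ ≤ |(ν₁.rnDeriv π x).toReal - (ν₂.rnDeriv π x).toReal| * L := by
          refine mul_le_mul_of_nonneg_left ?_ (abs_nonneg _)
          rw [abs_of_nonneg (h0 x)]; exact hLb x
  have : ∫ x, ψ x ∂ν₁ - ∫ x, ψ x ∂ν₂ ≤ L * l1Dist ν₁ ν₂ := by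
    rw [hsub]
    refine hmono.trans_eq ?_
    rw [l1Dist, ← hπ, mul_comm, integral_mul_const]
  linarith

/-- **Lemma 2**: for an invertible representation `f`, a loss `ℓ` satisfying assumption A1,
and any convex weights `λ⁽¹⁾, …, λ⁽ᔆ⁾` over the `S` seen domains, the unseen-domain risk of
`h = g ∘ f` is bounded by the convex combination of the seen-domain risks, `L` times the
convex combination of L¹ distances between pushforward distributions, and the convex
combination of the combined risks `σ^{(u,s)}`. -/
theorem lemma2_convex_combination_risk_bound
    (d d' : ℕ) (hd : 0 < d) (hd' : 0 < d') {Y : Type*} [MeasurableSpace Y]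
    (S : ℕ)
    (μu : Measure (EuclideanSpace ℝ (Fin d))) [IsProbabilityMeasure μu]
    (μs : Fin S → Measure (EuclideanSpace ℝ (Fin d)))
    (hμs : ∀ s, IsProbabilityMeasure (μs s))
    (f fu : EuclideanSpace ℝ (Fin d) → EuclideanSpace ℝ (Fin d'))
    (fs : Fin S → EuclideanSpace ℝ (Fin d) → EuclideanSpace ℝ (Fin d'))
    (g gu : EuclideanSpace ℝ (Fin d') → Y)
    (gs : Fin S → EuclideanSpace ℝ (Fin d') → Y)
    (hf : Measurable f) (hfu : Measurable fu) (hfs : ∀ s, Measurable (fs s))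
    (hg : Measurable g) (hgu : Measurable gu) (hgs : ∀ s, Measurable (gs s))
    (hfinv : Function.Bijective f)
    (ℓ : Y → Y → ℝ) (L : ℝ) (hL : 0 < L)
    (hℓmeas : Measurable (Function.uncurry ℓ))
    (hℓnonneg : ∀ a b, 0 ≤ ℓ a b)
    (hℓsymm : ∀ a b, ℓ a b = ℓ b a)
    (hℓbdd : ∀ a b, ℓ a b ≤ L)
    (hℓtri : ∀ a b c, ℓ a c ≤ ℓ a b + ℓ b c)
    (lam : Fin S → ℝ) (hlam_nonneg : ∀ s, 0 ≤ lam s)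
    (hlam_sum : ∑ s, lam s = 1) :
    ∫ x, ℓ (g (f x)) (gu (fu x)) ∂μu ≤
      (∑ s, lam s * ∫ x, ℓ (g (f x)) (gs s (fs s x)) ∂(μs s))
      + L * ∑ s, lam s * l1Dist (μu.map f) ((μs s).map f)
      + ∑ s, lam s * min (∫ x, ℓ (gu (fu x)) (gs s (fs s x)) ∂μu)
                         (∫ x, ℓ (gu (fu x)) (gs s (fs s x)) ∂(μs s)) := by
  haveI := hμs
  -- the inverse of f and its measurability
  set finv := Function.invFun f with hfinv_def
  have hleft : Function.LeftInverse finv f := Function.leftInverse_invFun hfinv.1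
  have hright : Function.RightInverse finv f := Function.rightInverse_invFun hfinv.2
  have e : MeasurableEmbedding f := hf.measurableEmbedding hfinv.1
  have hfinv_meas : Measurable finv := by
    intro s hs
    have him : finv ⁻¹' s = f '' s := by
      ext x
      constructor
      · intro hx; exact ⟨finv x, hx, hright x⟩
      · rintro ⟨a, ha, rfl⟩; simpa [hleft a] using ha
    rw [him]
    exact e.measurableSet_image' hs
  -- measurability of composed losses
  have hcomp : ∀ {a b : EuclideanSpace ℝ (Fin d) → Y}, Measurable a → Measurable b →
      Measurable fun x => ℓ (a x) (b x) := by
    intro a b ha hb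
    exact hℓmeas.comp (ha.prodMk hb)
  -- integrability of composed losses
  have hinteg : ∀ {a b : EuclideanSpace ℝ (Fin d) → Y}, Measurable a → Measurable b →
      ∀ (ν : Measure (EuclideanSpace ℝ (Fin d))), IsProbabilityMeasure ν →
      Integrable (fun x => ℓ (a x) (b x)) ν := by
    intro a b ha hb ν hν
    refine (integrable_const L).mono' (hcomp ha hb).aestronglyMeasurable ?_
    refine Filter.Eventually.of_forall fun x => ?_
    rw [Real.norm_eq_abs, abs_of_nonneg (hℓnonneg _ _)]
    exact hℓbdd _ _
  -- the transport step: moving a bounded loss from μu to μs costs at most L * l1Dist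
  have transport : ∀ (φ : EuclideanSpace ℝ (Fin d) → ℝ), Measurable φ → (∀ x, 0 ≤ φ x) → (∀ x, φ x ≤ L) →
      ∀ s, ∫ x, φ x ∂μu ≤ (∫ x, φ x ∂(μs s)) + L * l1Dist (μu.map f) ((μs s).map f) := by
    intro φ hφ h0 hb s
    haveI := hμs s
    haveI : IsProbabilityMeasure (μu.map f) := Measure.isProbabilityMeasure_map hf.aemeasurable
    haveI : IsProbabilityMeasure ((μs s).map f) := Measure.isProbabilityMeasure_map hf.aemeasurable
    have hψ : Measurable (φ ∘ finv) := hφ.comp hfinv_meas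
    have key := integral_le_integral_add_l1Dist (μu.map f) ((μs s).map f) hψ
      (fun x => h0 _) (fun x => hb _)
    rw [e.integral_map, e.integral_map] at key
    have hconv : ∀ x, (φ ∘ finv) (f x) = φ x := fun x => by
      simp only [Function.comp_apply, hleft x]
    simpa only [hconv] using key
  -- per-domain bound
  have hs_bound : ∀ s, ∫ x, ℓ (g (f x)) (gu (fu x)) ∂μu ≤
      (∫ x, ℓ (g (f x)) (gs s (fs s x)) ∂(μs s))
      + L * l1Dist (μu.map f) ((μs s).map f)
      + min (∫ x, ℓ (gu (fu x)) (gs s (fs s x)) ∂μu)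
            (∫ x, ℓ (gu (fu x)) (gs s (fs s x)) ∂(μs s)) := by
    intro s
    haveI := hμs s
    have hmg : Measurable fun x => g (f x) := hg.comp hf
    have hmu : Measurable fun x => gu (fu x) := hgu.comp hfu
    have hms : Measurable fun x => gs s (fs s x) := (hgs s).comp (hfs s)
    rcases le_total (∫ x, ℓ (gu (fu x)) (gs s (fs s x)) ∂μu)
        (∫ x, ℓ (gu (fu x)) (gs s (fs s x)) ∂(μs s)) with hmin | hmin
    · rw [min_eq_left hmin]
      have tri : ∫ x, ℓ (g (f x)) (gu (fu x)) ∂μu ≤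
          (∫ x, ℓ (g (f x)) (gs s (fs s x)) ∂μu)
          + ∫ x, ℓ (gu (fu x)) (gs s (fs s x)) ∂μu := by
        rw [← integral_add (hinteg hmg hms μu ‹_›) (hinteg hmu hms μu ‹_›)]
        refine integral_mono (hinteg hmg hmu μu ‹_›)
          ((hinteg hmg hms μu ‹_›).add (hinteg hmu hms μu ‹_›)) fun x => ?_
        calc ℓ (g (f x)) (gu (fu x))
            ≤ ℓ (g (f x)) (gs s (fs s x)) + ℓ (gs s (fs s x)) (gu (fu x)) := hℓtri _ _ _
          _ = ℓ (g (f x)) (gs s (fs s x)) + ℓ (gu (fu x)) (gs s (fs s x)) := by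
              rw [hℓsymm (gs s (fs s x))]
      have tr := transport (fun x => ℓ (g (f x)) (gs s (fs s x))) (hcomp hmg hms)
        (fun x => hℓnonneg _ _) (fun x => hℓbdd _ _) s
      linarith
    · rw [min_eq_right hmin]
      have tr := transport (fun x => ℓ (g (f x)) (gu (fu x))) (hcomp hmg hmu)
        (fun x => hℓnonneg _ _) (fun x => hℓbdd _ _) s
      have tri : ∫ x, ℓ (g (f x)) (gu (fu x)) ∂(μs s) ≤
          (∫ x, ℓ (g (f x)) (gs s (fs s x)) ∂(μs s))
          + ∫ x, ℓ (gu (fu x)) (gs s (fs s x)) ∂(μs s) := by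
        rw [← integral_add (hinteg hmg hms (μs s) ‹_›) (hinteg hmu hms (μs s) ‹_›)]
        refine integral_mono (hinteg hmg hmu (μs s) ‹_›)
          ((hinteg hmg hms (μs s) ‹_›).add (hinteg hmu hms (μs s) ‹_›)) fun x => ?_
        calc ℓ (g (f x)) (gu (fu x))
            ≤ ℓ (g (f x)) (gs s (fs s x)) + ℓ (gs s (fs s x)) (gu (fu x)) := hℓtri _ _ _
          _ = ℓ (g (f x)) (gs s (fs s x)) + ℓ (gu (fu x)) (gs s (fs s x)) := by
              rw [hℓsymm (gs s (fs s x))]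
      linarith
  -- combine with convex weights
  calc ∫ x, ℓ (g (f x)) (gu (fu x)) ∂μu
      = ∑ s, lam s * ∫ x, ℓ (g (f x)) (gu (fu x)) ∂μu := by
        rw [← Finset.sum_mul, hlam_sum, one_mul]
    _ ≤ ∑ s, lam s * ((∫ x, ℓ (g (f x)) (gs s (fs s x)) ∂(μs s))
          + L * l1Dist (μu.map f) ((μs s).map f)
          + min (∫ x, ℓ (gu (fu x)) (gs s (fs s x)) ∂μu)
                (∫ x, ℓ (gu (fu x)) (gs s (fs s x)) ∂(μs s))) := by
        refine Finset.sum_le_sum fun s _ => ?_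
        exact mul_le_mul_of_nonneg_left (hs_bound s) (hlam_nonneg s)
    _ = (∑ s, lam s * ∫ x, ℓ (g (f x)) (gs s (fs s x)) ∂(μs s))
          + L * ∑ s, lam s * l1Dist (μu.map f) ((μs s).map f)
          + ∑ s, lam s * min (∫ x, ℓ (gu (fu x)) (gs s (fs s x)) ∂μu)
                             (∫ x, ℓ (gu (fu x)) (gs s (fs s x)) ∂(μs s)) := by
        rw [Finset.mul_sum, ← Finset.sum_add_distrib, ← Finset.sum_add_distrib]
        refine Finset.sum_congr rfl fun s _ => ?_
        ring
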